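/- Fix a ≥ 0 and λ ≥ 1. Let 𝔤 have orthonormal basis {x₁,x₂,x₃} with brackets [x₁,x₂] = a x₂ - λ x₃, [x₁,x₃] = (1/λ) x₂ + a x₃. If the Ricci operator of this metric lies in the set of matrices of the form [[x₁₁,0,0],[x₂₁,x₂₂,x₂₃],[x₃₁,-λ² x₂₃,x₂₂]], then λ = 1. -/
import Mathlib


open Matrix

noncomputable section

/-- standard basis of ℝ³ -/
def e (i : Fin 3) : Fin 3 → ℝ := Pi.single i 1

/-- standard inner product on ℝ³ (the basis `e` is orthonormal) -/
def dotp (x y : Fin 3 → ℝ) : ℝ := ∑ i, x i * y i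

/-- Levi-Civita connection of the metric Lie algebra (ℝ³, br, dotp), via
    2⟨∇_X Y, Z⟩ = ⟨[Z,X],Y⟩ + ⟨X,[Z,Y]⟩ + ⟨[X,Y],Z⟩. -/
def nabla (br : (Fin 3 → ℝ) → (Fin 3 → ℝ) → (Fin 3 → ℝ)) (X Y : Fin 3 → ℝ) :
    Fin 3 → ℝ :=
  fun k => (1/2) * (dotp (br (e k) X) Y + dotp X (br (e k) Y) + dotp (br X Y) (e k))

/-- Riemannian curvature R(X,Y)Z = ∇_X∇_Y Z - ∇_Y∇_X Z - ∇_{[X,Y]}Z. -/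
def curv (br : (Fin 3 → ℝ) → (Fin 3 → ℝ) → (Fin 3 → ℝ)) (X Y Z : Fin 3 → ℝ) :
    Fin 3 → ℝ :=
  nabla br X (nabla br Y Z) - nabla br Y (nabla br X Z) - nabla br (br X Y) Z

/-- Ricci operator Ric(X) = Σᵢ R(X,eᵢ)eᵢ. -/
def ric (br : (Fin 3 → ℝ) → (Fin 3 → ℝ) → (Fin 3 → ℝ)) (X : Fin 3 → ℝ) :
    Fin 3 → ℝ :=
  ∑ i, curv br X (e i) (e i)

/-- The bracket with [x₁,x₂] = a x₂ - λ x₃, [x₁,x₃] = (1/λ) x₂ + a x₃, [x₂,x₃] = 0. -/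
def br10 (a l : ℝ) (x y : Fin 3 → ℝ) : Fin 3 → ℝ :=
  ![0,
    a * (x 0 * y 1 - x 1 * y 0) + (1/l) * (x 0 * y 2 - x 2 * y 0),
    -l * (x 0 * y 1 - x 1 * y 0) + a * (x 0 * y 2 - x 2 * y 0)]

/-- If the Ricci operator lies in the matrix expression of ℝ·id ⊕ Der(𝔤)
    in the basis {x₁,x₂,x₃}, then λ = 1. -/
theorem r3a'_soliton_forces (a l : ℝ) (ha : 0 ≤ a) (hl : 1 ≤ l) :
    (∃ x11 x21 x22 x23 x31 : ℝ,
      ∀ i : Fin 3, ric (br10 a l) (e i) =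
        Matrix.mulVec !![x11,0,0; x21,x22,x23; x31, -l^2 * x23, x22] (e i)) →
    l = 1 := by
  rintro ⟨x11,x21,x22,x23,x31,h⟩
  have hl0 : l ≠ 0 := by linarith
  have h1 := congrFun (h 1) 1
  have h2 := congrFun (h 2) 2
  simp [ric, curv, nabla, dotp, br10, e, Fin.sum_univ_succ, Matrix.mulVec,
    dotProduct, Pi.single_apply] at h1 h2
  ring_nf at h1 h2
  have hk : l ^ 2 = l⁻¹ ^ 2 := by linarith
  have hk2 : l ^ 2 * l ^ 2 = 1 := by
    field_simp at hk
    linarith [hk]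
  nlinarith [hk2, sq_nonneg (l - 1), sq_nonneg (l + 1)]
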